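/- Fermionic vacuum expectation formula: for the free fermion fields ψ(z) = Σ_m ψ_m z^m and ψ*(z) = Σ_m ψ*_m z^{-m-1} and distinct nonzero complex numbers z₁,…,z_k, z_{-1},…,z_{-k}, the expectation ⟨n| ψ(z₁)⋯ψ(z_k) ψ*(z_{-1})⋯ψ*(z_{-k}) |n⟩ = ∏_{i=1}^k (z_i/z_{-i})^n · ∏_{i<j}(z_i - z_j)(z_{-i} - z_{-j}) / ∏_{i,j}(z_i - z_{-j}). -/

import Mathlib

open Finset

/-- Column operations: subtracting column 0 from every other column preserves det. -/
lemma det_sub_cols {k : ℕ} (M : Matrix (Fin (k+1)) (Fin (k+1)) ℂ) :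
    Matrix.det (Matrix.of fun i j => if j = 0 then M i 0 else M i j - M i 0) = M.det := by
  set E : Matrix (Fin (k+1)) (Fin (k+1)) ℂ :=
    Matrix.of fun l j => (if l = j then (1:ℂ) else 0) +
      (if l = 0 then (if j = 0 then 0 else -1) else 0) with hE
  have hME : (Matrix.of fun i j => if j = 0 then M i 0 else M i j - M i 0) = M * E := by
    ext i j
    simp only [Matrix.mul_apply, hE, Matrix.of_apply, mul_add, mul_ite, mul_one, mul_zero,
      Finset.sum_add_distrib, Finset.sum_ite_eq', Finset.mem_univ, if_true, mul_neg]
    by_cases hj : j = 0 <;> simp [hj, sub_eq_add_neg]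
  have hEdet : E.det = 1 := by
    have ht : E.BlockTriangular id := by
      intro i j hij
      have h1 : i ≠ j := fun h => by simp [h] at hij
      have h2 : i ≠ 0 := by
        intro h; subst h
        exact absurd hij (by simpa using Fin.zero_le j)
      simp [hE, h1, h2]
    rw [Matrix.det_of_upperTriangular ht]
    have : ∀ l, E l l = 1 := by intro l; by_cases h : l = 0 <;> simp [hE, h]
    simp [this]
  rw [hME, Matrix.det_mul, hEdet, mul_one]

/-- Row operations: subtracting row 0 from every other row preserves det. -/
lemma det_sub_rows {k : ℕ} (M : Matrix (Fin (k+1)) (Fin (k+1)) ℂ) :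
    Matrix.det (Matrix.of fun i j => if i = 0 then M 0 j else M i j - M 0 j) = M.det := by
  rw [← Matrix.det_transpose M, ← det_sub_cols M.transpose, ← Matrix.det_transpose]
  congr 1

set_option maxHeartbeats 1000000 in
lemma cauchy_det : ∀ (k : ℕ) (x y : Fin k → ℂ), (∀ i j, x i ≠ y j) →
    Matrix.det (Matrix.of fun i j => (x i - y j)⁻¹) =
      (-1 : ℂ) ^ (k * (k - 1) / 2) *
        (∏ i, ∏ j ∈ Finset.Ioi i, (x i - x j) * (y i - y j)) /
        (∏ i, ∏ j, (x i - y j)) := by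
  intro k
  induction k with
  | zero => intro x y h; simp
  | succ k ih =>
    intro x y h
    have hxy : ∀ i j, x i - y j ≠ 0 := fun i j => sub_ne_zero.mpr (h i j)
    -- Step 1: column operations
    have s1 : Matrix.det (Matrix.of fun i j : Fin (k+1) => (x i - y j)⁻¹) =
        Matrix.det (Matrix.of fun i j : Fin (k+1) =>
          if j = 0 then (x i - y 0)⁻¹ else (x i - y j)⁻¹ - (x i - y 0)⁻¹) := by
      exact (det_sub_cols (Matrix.of fun i j : Fin (k+1) => (x i - y j)⁻¹)).symm
    -- Step 2: factor rows
    have s2 : (Matrix.of fun i j : Fin (k+1) =>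
          if j = 0 then (x i - y 0)⁻¹ else (x i - y j)⁻¹ - (x i - y 0)⁻¹) =
        (Matrix.of fun i j : Fin (k+1) => (x i - y 0)⁻¹ *
          (Matrix.of fun i j : Fin (k+1) =>
            if j = 0 then 1 else (y j - y 0) * (x i - y j)⁻¹) i j) := by
      ext i j
      by_cases hj : j = 0
      · simp [hj, hxy i 0]
      · simp only [Matrix.of_apply, if_neg hj]
        rw [inv_sub_inv (hxy i j) (hxy i 0)]
        rw [div_eq_mul_inv, mul_inv]
        ring_nf
    -- Step 3: factor columns
    have s3 : (Matrix.of fun i j : Fin (k+1) =>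
          if j = 0 then (1:ℂ) else (y j - y 0) * (x i - y j)⁻¹) =
        (Matrix.of fun i j : Fin (k+1) => (if j = 0 then (1:ℂ) else (y j - y 0)) *
          (Matrix.of fun i j : Fin (k+1) =>
            if j = 0 then 1 else (x i - y j)⁻¹) i j) := by
      ext i j
      by_cases hj : j = 0 <;> simp [hj]
    -- Step 4: row operations on P
    set P : Matrix (Fin (k+1)) (Fin (k+1)) ℂ :=
      Matrix.of fun i j => if j = 0 then 1 else (x i - y j)⁻¹ with hP
    have s4 : P.det = Matrix.det (Matrix.of fun i j : Fin (k+1) =>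
        if i = 0 then P 0 j else P i j - P 0 j) := (det_sub_rows P).symm
    -- Step 5 & 6: factor rows and columns of the result
    have s5 : (Matrix.of fun i j : Fin (k+1) =>
          if i = 0 then P 0 j else P i j - P 0 j) =
        (Matrix.of fun i j : Fin (k+1) =>
          ((if i = 0 then (1:ℂ) else (x 0 - x i)) *
            ((if j = 0 then (1:ℂ) else (x 0 - y j)⁻¹) *
            (Matrix.of fun i j : Fin (k+1) =>
              if j = 0 then (if i = 0 then (1:ℂ) else 0)
              else (if i = 0 then 1 else (x i - y j)⁻¹)) i j))) := by
      ext i j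
      by_cases hi : i = 0 <;> by_cases hj : j = 0
      · simp [hP, hi, hj]
      · simp [hP, hi, hj]
      · simp [hP, hi, hj]
      · simp only [Matrix.of_apply, hP, if_neg hi, if_neg hj]
        rw [inv_sub_inv (hxy i j) (hxy 0 j)]
        rw [div_eq_mul_inv, mul_inv]
        ring_nf
    -- the matrix R remaining after all factoring
    set R : Matrix (Fin (k+1)) (Fin (k+1)) ℂ :=
      Matrix.of fun i j => if j = 0 then (if i = 0 then (1:ℂ) else 0)
        else (if i = 0 then 1 else (x i - y j)⁻¹) with hR
    -- small Cauchy matrix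
    have s7 : R.det =
        Matrix.det (Matrix.of fun i j : Fin k => (x i.succ - y j.succ)⁻¹) := by
      rw [Matrix.det_succ_column_zero, Fin.sum_univ_succ]
      simp only [hR, Matrix.of_apply, Fin.succ_ne_zero, if_false, ite_false, reduceIte,
        Fin.val_zero, pow_zero, one_mul, mul_zero, zero_mul, Finset.sum_const_zero,
        add_zero, mul_one]
      congr 1
    -- nonvanishing of the denominators
    have hA : (∏ i : Fin (k+1), (x i - y 0)) ≠ 0 :=
      Finset.prod_ne_zero_iff.mpr fun i _ => hxy i 0
    have hD : (∏ j : Fin k, (x 0 - y j.succ)) ≠ 0 :=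
      Finset.prod_ne_zero_iff.mpr fun j _ => hxy 0 j.succ
    have hQ : (∏ i : Fin k, ∏ j : Fin k, (x i.succ - y j.succ)) ≠ 0 :=
      Finset.prod_ne_zero_iff.mpr fun i _ =>
        Finset.prod_ne_zero_iff.mpr fun j _ => hxy i.succ j.succ
    -- the big determinant computation
    have dets : (Matrix.of fun i j : Fin (k+1) => (x i - y j)⁻¹).det =
        (∏ i : Fin (k+1), (x i - y 0)⁻¹) *
        ((∏ j : Fin k, (y j.succ - y 0)) *
        ((∏ i : Fin k, (x 0 - x i.succ)) *
        ((∏ j : Fin k, (x 0 - y j.succ)⁻¹) *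
          Matrix.det (Matrix.of fun i j : Fin k => (x i.succ - y j.succ)⁻¹)))) := by
      rw [s1, s2]
      rw [show Matrix.det (Matrix.of fun i j : Fin (k+1) => (x i - y 0)⁻¹ *
          (Matrix.of fun i j : Fin (k+1) =>
            if j = 0 then 1 else (y j - y 0) * (x i - y j)⁻¹) i j) =
          (∏ i : Fin (k+1), (x i - y 0)⁻¹) *
          Matrix.det (Matrix.of fun i j : Fin (k+1) =>
            if j = 0 then 1 else (y j - y 0) * (x i - y j)⁻¹) from
        Matrix.det_mul_column _ _]
      rw [s3]
      rw [show Matrix.det (Matrix.of fun i j : Fin (k+1) =>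
          (if j = 0 then (1:ℂ) else (y j - y 0)) * P i j) =
          (∏ j : Fin (k+1), (if j = 0 then (1:ℂ) else (y j - y 0))) * P.det from
        Matrix.det_mul_row _ _]
      rw [s4, s5]
      rw [show Matrix.det (Matrix.of fun i j : Fin (k+1) =>
          ((if i = 0 then (1:ℂ) else (x 0 - x i)) *
            ((if j = 0 then (1:ℂ) else (x 0 - y j)⁻¹) * R i j))) =
          (∏ i : Fin (k+1), (if i = 0 then (1:ℂ) else (x 0 - x i))) *
          Matrix.det (Matrix.of fun i j : Fin (k+1) =>
            (if j = 0 then (1:ℂ) else (x 0 - y j)⁻¹) * R i j) from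
        Matrix.det_mul_column _ _]
      rw [show Matrix.det (Matrix.of fun i j : Fin (k+1) =>
          (if j = 0 then (1:ℂ) else (x 0 - y j)⁻¹) * R i j) =
          (∏ j : Fin (k+1), (if j = 0 then (1:ℂ) else (x 0 - y j)⁻¹)) * R.det from
        Matrix.det_mul_row _ _]
      rw [s7]
      rw [Fin.prod_univ_succ (fun j : Fin (k+1) => (if j = 0 then (1:ℂ) else (y j - y 0)))]
      rw [Fin.prod_univ_succ (fun i : Fin (k+1) => (if i = 0 then (1:ℂ) else (x 0 - x i)))]
      rw [Fin.prod_univ_succ (fun j : Fin (k+1) => (if j = 0 then (1:ℂ) else (x 0 - y j)⁻¹))]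
      simp only [Fin.succ_ne_zero, if_false, ite_false, reduceIte, one_mul]
    rw [dets, ih (fun i => x i.succ) (fun j => y j.succ) (fun i j => h i.succ j.succ)]
    -- decompose the RHS products
    have hPbig : (∏ i : Fin (k+1), ∏ j ∈ Finset.Ioi i, (x i - x j) * (y i - y j)) =
        ((∏ j : Fin k, (x 0 - x j.succ)) * (∏ j : Fin k, (y 0 - y j.succ))) *
        (∏ i : Fin k, ∏ j ∈ Finset.Ioi i,
          (x i.succ - x j.succ) * (y i.succ - y j.succ)) := by
      rw [Fin.prod_univ_succ]
      congr 1
      · rw [Fin.prod_Ioi_zero, Finset.prod_mul_distrib]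
      · exact Finset.prod_congr rfl fun i _ => Fin.prod_Ioi_succ _ i
    have hQbig : (∏ i : Fin (k+1), ∏ j : Fin (k+1), (x i - y j)) =
        (∏ i : Fin (k+1), (x i - y 0)) * ((∏ j : Fin k, (x 0 - y j.succ)) *
          (∏ i : Fin k, ∏ j : Fin k, (x i.succ - y j.succ))) := by
      calc (∏ i : Fin (k+1), ∏ j : Fin (k+1), (x i - y j))
          = ∏ i : Fin (k+1), ((x i - y 0) * ∏ j : Fin k, (x i - y j.succ)) :=
            Finset.prod_congr rfl fun i _ => Fin.prod_univ_succ _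
        _ = (∏ i : Fin (k+1), (x i - y 0)) *
            ∏ i : Fin (k+1), ∏ j : Fin k, (x i - y j.succ) := Finset.prod_mul_distrib
        _ = _ := by
            rw [Fin.prod_univ_succ (fun i : Fin (k+1) => ∏ j : Fin k, (x i - y j.succ))]
    rw [hPbig, hQbig]
    -- sign bookkeeping
    have hpow : (-1 : ℂ) ^ ((k+1) * ((k+1) - 1) / 2) =
        (-1 : ℂ) ^ (k * (k - 1) / 2) * (-1) ^ k := by
      rw [← pow_add]
      congr 1
      rcases k with _ | m
      · norm_num
      · have hh : (m + 1 + 1) * (m + 1 + 1 - 1) = (m + 1) * (m + 1 - 1) + (m + 1) * 2 := by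
          simp only [Nat.add_sub_cancel]
          ring
        rw [hh, Nat.add_mul_div_right _ _ (by norm_num : 0 < 2)]
    have hB : (∏ j : Fin k, (y j.succ - y 0)) =
        (-1 : ℂ) ^ k * ∏ j : Fin k, (y 0 - y j.succ) := by
      have h1 : ∀ j : Fin k, y j.succ - y 0 = (-1) * (y 0 - y j.succ) := fun _ => by ring
      simp_rw [h1]
      rw [Finset.prod_mul_distrib, Finset.prod_const]
      simp
    rw [hB, hpow]
    rw [Finset.prod_inv_distrib, Finset.prod_inv_distrib]
    field_simp



open Finset in
/-- Fermionic vacuum expectation formula.  By the Wick rule, the expectation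
`⟨n| ψ(z₁)⋯ψ(z_k) ψ*(w₁)⋯ψ*(w_k) |n⟩` (with `w_j = z_{-j}`) equals
`(-1)^{k(k-1)/2} det(⟨n|ψ(z_i)ψ*(w_j)|n⟩)` where the two-point function is the
rational function `⟨n|ψ(z)ψ*(w)|n⟩ = (z/w)^n / (z - w)`.  The claim is that this
equals `∏_i (z_i/w_i)^n · ∏_{i<j} (z_i - z_j)(w_i - w_j) / ∏_{i,j} (z_i - w_j)`. -/
theorem fermionic_vev_product_formula (k : ℕ) (n : ℤ) (z w : Fin k → ℂ)
    (hz0 : ∀ i, z i ≠ 0) (hw0 : ∀ i, w i ≠ 0)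
    (hzz : ∀ i j, i ≠ j → z i ≠ z j) (hww : ∀ i j, i ≠ j → w i ≠ w j)
    (hzw : ∀ i j, z i ≠ w j) :
    (-1 : ℂ) ^ (k * (k - 1) / 2) *
      Matrix.det (Matrix.of fun i j : Fin k => (z i / w j) ^ n / (z i - w j)) =
      (∏ i : Fin k, (z i / w i) ^ n) *
      (∏ i : Fin k, ∏ j ∈ Finset.univ.filter (fun j : Fin k => i < j),
        ((z i - z j) * (w i - w j))) /
      (∏ i : Fin k, ∏ j : Fin k, (z i - w j)) := by
  have hE : (Matrix.of fun i j : Fin k => (z i / w j) ^ n / (z i - w j)) =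
      Matrix.of fun i j : Fin k => (z i ^ n) *
        ((Matrix.of fun i j : Fin k => ((w j ^ n)⁻¹ *
          ((Matrix.of fun i j : Fin k => (z i - w j)⁻¹) i j))) i j) := by
    ext i j
    simp only [Matrix.of_apply]
    rw [div_zpow, div_eq_mul_inv, div_eq_mul_inv, mul_assoc]
  rw [hE]
  rw [show Matrix.det (Matrix.of fun i j : Fin k => (z i ^ n) *
        ((Matrix.of fun i j : Fin k => ((w j ^ n)⁻¹ *
          ((Matrix.of fun i j : Fin k => (z i - w j)⁻¹) i j))) i j)) =
      (∏ i : Fin k, z i ^ n) * Matrix.det (Matrix.of fun i j : Fin k => ((w j ^ n)⁻¹ *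
          ((Matrix.of fun i j : Fin k => (z i - w j)⁻¹) i j))) from
    Matrix.det_mul_column _ _]
  rw [show Matrix.det (Matrix.of fun i j : Fin k => ((w j ^ n)⁻¹ *
          ((Matrix.of fun i j : Fin k => (z i - w j)⁻¹) i j))) =
      (∏ j : Fin k, (w j ^ n)⁻¹) *
        Matrix.det (Matrix.of fun i j : Fin k => (z i - w j)⁻¹) from
    Matrix.det_mul_row _ _]
  rw [cauchy_det k z w hzw]
  have hfil : ∀ i : Fin k, Finset.univ.filter (fun j : Fin k => i < j) = Finset.Ioi i := by
    intro i; ext a; simp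
  simp only [hfil]
  have hprod : (∏ i : Fin k, (z i / w i) ^ n) =
      (∏ i : Fin k, z i ^ n) * (∏ i : Fin k, w i ^ n)⁻¹ := by
    rw [← Finset.prod_inv_distrib, ← Finset.prod_mul_distrib]
    exact Finset.prod_congr rfl fun i _ => by rw [div_zpow, div_eq_mul_inv]
  have hsq : (-1 : ℂ) ^ (k * (k - 1) / 2) * (-1 : ℂ) ^ (k * (k - 1) / 2) = 1 := by
    rw [← mul_pow]; norm_num
  rw [hprod]
  simp only [Finset.prod_inv_distrib]
  rw [div_eq_mul_inv, div_eq_mul_inv]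
  linear_combination ((∏ i : Fin k, z i ^ n) * (∏ i : Fin k, w i ^ n)⁻¹ *
    (∏ i : Fin k, ∏ j ∈ Finset.Ioi i, (z i - z j) * (w i - w j)) *
    (∏ i : Fin k, ∏ j : Fin k, (z i - w j))⁻¹) * hsq
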